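/- In the setting of Proposition 5.6 (M satisfying the reduction condition, U_M nonempty), the set U_{M,min} of minimizers of w_p on U_M decomposes as a disjoint union over the set Γ_M of sequences (γ_0,...,γ_{a−1}) of good elements with Σ_k p^k γ_k ∈ M and Σ_k w(γ_k) = w_p(M): namely U_{M,min} = ⋃ U(γ_0,...,γ_{a−1}), where U(γ_0,...,γ_{a−1}) consists of those u with u_i = Σ_k u_i^{(k)} p^k for some choice of u^{(k)} ∈ U⁺_min(γ_k) for each k, and these subsets are pairwise disjoint. -/

import Mathlib

namespace Stmt11Aux

/-- truncated digit sum -/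
def S (p a x : ℕ) : ℕ := ∑ k ∈ Finset.range a, x / p ^ k % p

/-- auxiliary sum for Legendre's identity -/
def T (p a x : ℕ) : ℕ := ∑ k ∈ Finset.range a, x / p ^ (k + 1)

lemma div_pow_succ (p x k : ℕ) : x / p ^ (k + 1) = (x / p) / p ^ k := by
  rw [Nat.div_div_eq_div_mul, ← pow_succ']

/-- full digit sum -/
def sd (p x : ℕ) : ℕ := S p x x

lemma S_eq_of_le {p : ℕ} (hp : 2 ≤ p) {a b x : ℕ} (hx : x < p ^ a) (hab : a ≤ b) :
    S p b x = S p a x := by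
  unfold S
  rw [← Finset.sum_range_add_sum_Ico _ hab]
  have : ∑ k ∈ Finset.Ico a b, x / p ^ k % p = 0 := by
    apply Finset.sum_eq_zero
    intro k hk
    have : x < p ^ k := lt_of_lt_of_le hx (Nat.pow_le_pow_right (by omega) (Finset.mem_Ico.mp hk).1)
    rw [Nat.div_eq_of_lt this]
    simp
  omega

lemma lt_pow_self' {p x : ℕ} (hp : 2 ≤ p) : x < p ^ x :=
  lt_of_lt_of_le (Nat.lt_two_pow_self (n := x)) (Nat.pow_le_pow_left hp x)

lemma sd_eq_S {p a x : ℕ} (hp : 2 ≤ p) (hx : x < p ^ a) : sd p x = S p a x := by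
  unfold sd
  rcases le_total a x with h | h
  · exact S_eq_of_le hp hx h
  · exact (S_eq_of_le hp (lt_pow_self' hp) h).symm

lemma S_succ {p a x : ℕ} : S p (a + 1) x = x % p + S p a (x / p) := by
  unfold S
  rw [Finset.sum_range_succ']
  simp only [pow_zero, Nat.div_one]
  rw [add_comm]
  congr 1
  exact Finset.sum_congr rfl fun k _ => by rw [div_pow_succ]

lemma sd_rec {p x : ℕ} (hp : 2 ≤ p) : sd p x = x % p + sd p (x / p) := by
  have h1 : x < p ^ (x + 1) := lt_of_lt_of_le (lt_pow_self' hp)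
    (Nat.pow_le_pow_right (by omega) (by omega))
  have h2 : x / p < p ^ x := lt_of_le_of_lt (Nat.div_le_self x p) (lt_pow_self' hp)
  rw [sd_eq_S hp h1, S_succ, ← sd_eq_S hp h2]

lemma T_succ {p a x : ℕ} : T p (a + 1) x = x / p + T p a (x / p) := by
  unfold T
  rw [Finset.sum_range_succ']
  simp only [zero_add, pow_one]
  rw [add_comm]
  congr 1
  exact Finset.sum_congr rfl fun k _ => by rw [div_pow_succ]

lemma legendre {p : ℕ} (hp : 2 ≤ p) : ∀ a x, x < p ^ a → S p a x + (p - 1) * T p a x = x := by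
  intro a
  induction a with
  | zero =>
    intro x hx
    simp only [pow_zero, Nat.lt_one_iff] at hx
    subst hx
    simp [S, T]
  | succ a ih =>
    intro x hx
    have hq : x / p < p ^ a := by
      rw [Nat.div_lt_iff_lt_mul (by omega)]
      calc x < p ^ (a+1) := hx
        _ = p ^ a * p := by ring
    have ihx := ih (x / p) hq
    rw [S_succ, T_succ]
    have hx2 : x % p + p * (x / p) = x := Nat.mod_add_div x p
    have hmul : (p - 1) * (x / p + T p a (x / p)) =
        (p - 1) * (x / p) + (p - 1) * T p a (x / p) := by ring
    have hpp : (p - 1) * (x / p) + x / p = p * (x / p) := by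
      calc (p - 1) * (x / p) + x / p = ((p - 1) + 1) * (x / p) := by ring
        _ = p * (x / p) := by rw [Nat.sub_add_cancel (by omega)]
    omega

lemma sd_le {p x : ℕ} (hp : 2 ≤ p) : sd p x ≤ x := by
  have := legendre hp x x (lt_pow_self' hp)
  unfold sd
  omega

lemma sd_lt {p x : ℕ} (hp : 2 ≤ p) (hx : p ≤ x) : sd p x < x := by
  have h := legendre hp x x (lt_pow_self' hp)
  have hT : 1 ≤ T p x x := by
    have h1 : (0:ℕ) ∈ Finset.range x := by
      simp only [Finset.mem_range]; omega
    calc (1:ℕ) ≤ x / p ^ (0 + 1) := by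
          simp only [zero_add, pow_one]
          exact Nat.one_le_div_iff (by omega) |>.mpr hx
      _ ≤ T p x x := Finset.single_le_sum (f := fun k => x / p ^ (k + 1)) (by intros; positivity) h1
  unfold sd
  have h2 : (p - 1) * 1 ≤ (p - 1) * T p x x := Nat.mul_le_mul_left _ hT
  omega

lemma T_superadd {p a x y : ℕ} (hp : 2 ≤ p) : T p a x + T p a y ≤ T p a (x + y) := by
  unfold T
  rw [← Finset.sum_add_distrib]
  apply Finset.sum_le_sum
  intro k _
  rw [Nat.le_div_iff_mul_le (by positivity)]
  have h1 : x / p ^ (k+1) * p ^ (k+1) ≤ x := Nat.div_mul_le_self x _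
  have h2 : y / p ^ (k+1) * p ^ (k+1) ≤ y := Nat.div_mul_le_self y _
  calc (x / p ^ (k+1) + y / p ^ (k+1)) * p ^ (k+1)
      = x / p ^ (k+1) * p ^ (k+1) + y / p ^ (k+1) * p ^ (k+1) := by ring
    _ ≤ x + y := by omega

lemma sd_subadd {p x y : ℕ} (hp : 2 ≤ p) : sd p (x + y) ≤ sd p x + sd p y := by
  set a := x + y with ha
  have hxy : x + y < p ^ a := lt_pow_self' hp
  have hx : x < p ^ a := by omega
  have hy : y < p ^ a := by omega
  rw [sd_eq_S hp hxy, sd_eq_S hp hx, sd_eq_S hp hy]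
  have l1 := legendre hp a (x + y) hxy
  have l2 := legendre hp a x hx
  have l3 := legendre hp a y hy
  have hsup := T_superadd (a := a) (x := x) (y := y) hp
  have hmono : (p - 1) * (T p a x + T p a y) ≤ (p - 1) * T p a (x + y) :=
    Nat.mul_le_mul_left _ hsup
  have hd : (p - 1) * (T p a x + T p a y) = (p-1) * T p a x + (p-1) * T p a y := by ring
  omega

lemma sd_mul_pow {p x k : ℕ} (hp : 2 ≤ p) : sd p (x * p ^ k) = sd p x := by
  induction k with
  | zero => simp
  | succ k ih =>
    have h1 : x * p ^ (k+1) = p * (x * p ^ k) := by ring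
    have hmod : x * p ^ (k+1) % p = 0 := by rw [h1]; exact Nat.mul_mod_right p _
    have hdiv : x * p ^ (k+1) / p = x * p ^ k := by
      rw [h1]; exact Nat.mul_div_cancel_left _ (by omega)
    rw [sd_rec hp, hmod, hdiv, ih, Nat.zero_add]

lemma sd_split {p : ℕ} (hp : 2 ≤ p) : ∀ a x r, r < p ^ a →
    sd p (x * p ^ a + r) = sd p x + sd p r := by
  intro a
  induction a with
  | zero =>
    intro x r hr
    simp only [pow_zero, Nat.lt_one_iff] at hr
    subst hr
    simp [sd, S]
  | succ a ih =>
    intro x r hr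
    have e1 : x * p ^ (a+1) + r = p * (x * p ^ a) + r := by ring
    have hmod : (x * p ^ (a+1) + r) % p = r % p := by
      rw [e1, Nat.mul_add_mod]
    have hdiv : (x * p ^ (a+1) + r) / p = x * p ^ a + r / p := by
      rw [e1, Nat.mul_add_div (by omega)]
    have hrp : r / p < p ^ a := by
      rw [Nat.div_lt_iff_lt_mul (by omega)]
      calc r < p ^ (a+1) := hr
        _ = p ^ a * p := by ring
    rw [sd_rec hp (x := x * p ^ (a+1) + r), hmod, hdiv, ih x (r / p) hrp,
      sd_rec hp (x := r)]
    omega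

lemma expansion {p : ℕ} (hp : 2 ≤ p) : ∀ a x, x < p ^ a →
    ∑ k ∈ Finset.range a, (x / p ^ k % p) * p ^ k = x := by
  intro a
  induction a with
  | zero =>
    intro x hx
    simp only [pow_zero, Nat.lt_one_iff] at hx
    subst hx
    simp
  | succ a ih =>
    intro x hx
    rw [Finset.sum_range_succ']
    simp only [pow_zero, Nat.div_one, mul_one]
    have hq : x / p < p ^ a := by
      rw [Nat.div_lt_iff_lt_mul (by omega)]
      calc x < p ^ (a+1) := hx
        _ = p ^ a * p := by ring
    have ihx := ih (x / p) hq
    calc (∑ k ∈ Finset.range a, x / p ^ (k+1) % p * p ^ (k+1)) + x % p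
        = (∑ k ∈ Finset.range a, ((x/p) / p ^ k % p * p ^ k)) * p + x % p := by
          rw [Finset.sum_mul]
          congr 1
          refine Finset.sum_congr rfl fun k _ => ?_
          rw [div_pow_succ]
          ring
      _ = (x / p) * p + x % p := by rw [ihx]
      _ = p * (x / p) + x % p := by ring
      _ = x := Nat.div_add_mod x p


lemma digits_of_expansion {p : ℕ} (hp : 2 ≤ p) : ∀ a (e : ℕ → ℕ), (∀ k, k < a → e k < p) →
    ((∑ k ∈ Finset.range a, e k * p ^ k) < p ^ a ∧
      ∀ j, j < a → (∑ k ∈ Finset.range a, e k * p ^ k) / p ^ j % p = e j) := by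
  intro a
  induction a with
  | zero => intro e he; simp
  | succ a ih =>
    intro e he
    set x := ∑ k ∈ Finset.range (a+1), e k * p ^ k with hx
    set y := ∑ k ∈ Finset.range a, e (k+1) * p ^ k with hy
    have hxy : x = e 0 + y * p := by
      rw [hx, Finset.sum_range_succ']
      simp only [pow_zero, mul_one]
      rw [add_comm, Finset.sum_mul]
      congr 1
      exact Finset.sum_congr rfl fun k _ => by ring
    obtain ⟨hylt, hyd⟩ := ih (fun k => e (k+1)) (fun k hk => he (k+1) (by omega))
    have he0 : e 0 < p := he 0 (by omega)
    have hmod : x % p = e 0 := by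
      rw [hxy, Nat.add_mul_mod_self_right, Nat.mod_eq_of_lt he0]
    have hdiv : x / p = y := by
      rw [hxy, Nat.add_mul_div_right _ _ (by omega : 0 < p), Nat.div_eq_of_lt he0, Nat.zero_add]
    constructor
    · rw [hxy]
      have h1 : y ≤ p ^ a - 1 := by omega
      have h2 : y * p ≤ (p ^ a - 1) * p := Nat.mul_le_mul_right p h1
      have h3 : (p ^ a - 1) * p + p = p ^ a * p := by
        rw [Nat.sub_mul, Nat.one_mul, Nat.sub_add_cancel]
        calc p = 1 * p := (Nat.one_mul p).symm
          _ ≤ p ^ a * p := Nat.mul_le_mul_right p (Nat.one_le_pow _ _ (by omega))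
      have h4 : p ^ a * p = p ^ (a + 1) := by ring
      omega
    · intro j hj
      cases j with
      | zero => simpa using hmod
      | succ j =>
        rw [div_pow_succ, hdiv]
        exact hyd j (by omega)

lemma S_of_expansion {p : ℕ} (hp : 2 ≤ p) (a : ℕ) (e : ℕ → ℕ) (he : ∀ k, k < a → e k < p) :
    S p a (∑ k ∈ Finset.range a, e k * p ^ k) = ∑ k ∈ Finset.range a, e k := by
  obtain ⟨_, hd⟩ := digits_of_expansion hp a e he
  unfold S
  exact Finset.sum_congr rfl fun k hk => hd k (Finset.mem_range.mp hk)

lemma sd_of_expansion {p : ℕ} (hp : 2 ≤ p) (a : ℕ) (e : ℕ → ℕ) (he : ∀ k, k < a → e k < p) :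
    sd p (∑ k ∈ Finset.range a, e k * p ^ k) = ∑ k ∈ Finset.range a, e k := by
  obtain ⟨hlt, _⟩ := digits_of_expansion hp a e he
  rw [sd_eq_S hp hlt, S_of_expansion hp a e he]

/-- iterated reduction mod `q - 1` into `[1, q-1]` (identity below `q`) -/
def red (q x : ℕ) : ℕ := if x < q then x else (x - 1) % (q - 1) + 1

lemma red_le {q x : ℕ} (hq : 2 ≤ q) : red q x ≤ q - 1 := by
  unfold red
  split
  · omega
  · have : (x - 1) % (q - 1) < q - 1 := Nat.mod_lt _ (by omega)
    omega

lemma red_eq_of_lt {q x : ℕ} (h : x < q) : red q x = x := if_pos h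

lemma red_step {q x : ℕ} (hq : 2 ≤ q) (hx : q ≤ x) : red q (x - (q - 1)) = red q x := by
  have hx1 : 1 ≤ x - (q - 1) := by omega
  simp only [red, if_neg (show ¬ x < q by omega)]
  by_cases h : x - (q - 1) < q
  · rw [if_pos h]
    have e : x - 1 = (q - 1) + (x - q) := by omega
    rw [e, Nat.add_mod_left, Nat.mod_eq_of_lt (show x - q < q - 1 by omega)]
    omega
  · rw [if_neg h]
    have e : x - 1 = (x - (q - 1) - 1) + (q - 1) := by omega
    rw [e, Nat.add_mod_right]

lemma red_add_mul {q y : ℕ} (hq : 2 ≤ q) (hy : 1 ≤ y) :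
    ∀ m, red q (y + m * (q - 1)) = red q y := by
  intro m
  induction m with
  | zero => simp
  | succ m ih =>
    have e1 : y + (m + 1) * (q - 1) = y + m * (q - 1) + (q - 1) := by ring
    rw [e1]
    have h3 := red_step (q := q) (x := y + m * (q - 1) + (q - 1)) hq (by omega)
    have e2 : y + m * (q - 1) + (q - 1) - (q - 1) = y + m * (q - 1) := by omega
    rw [e2] at h3
    rw [← h3, ih]

lemma sd_red_le {p aexp q : ℕ} (hp : 2 ≤ p) (hq : q = p ^ aexp) (hq2 : 2 ≤ q) :
    ∀ x, sd p (red q x) ≤ sd p x := by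
  subst hq
  set q := p ^ aexp with hq
  intro x
  induction x using Nat.strong_induction_on with
  | _ x ih =>
    by_cases hx : x < q
    · rw [red_eq_of_lt hx]
    · push_neg at hx
      set m := x / q with hm
      set r := x % q with hr
      have hm1 : 1 ≤ m := (Nat.one_le_div_iff (by omega)).mpr hx
      have hrq : r < q := Nat.mod_lt _ (by omega)
      have hxs : x = m * q + r := by
        rw [hm, hr, Nat.mul_comm]
        exact (Nat.div_add_mod x q).symm
      have hsplit : sd p x = sd p m + sd p r := by
        rw [hxs]
        exact sd_split hp aexp m r hrq
      have hlt : m + r < x := by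
        have h2 : m * 2 ≤ m * q := Nat.mul_le_mul_left m hq2
        omega
      have hsub : sd p (m + r) ≤ sd p m + sd p r := sd_subadd hp
      have hred : red q (m + r) = red q x := by
        have hmm : m * q = m + m * (q - 1) := by
          have : m * q = m * (1 + (q - 1)) := by
            congr 1
            omega
          rw [this]
          ring
        have e1 : x = (m + r) + m * (q - 1) := by omega
        rw [e1, red_add_mul hq2 (by omega)]
      calc sd p (red q x) = sd p (red q (m + r)) := by rw [hred]
        _ ≤ sd p (m + r) := ih _ hlt
        _ ≤ sd p m + sd p r := hsub
        _ = sd p x := hsplit.symm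

lemma sum_update_int {N n : ℕ} (a : Fin N → Fin n → ℤ) (c : Fin N → ℕ) (i₀ : Fin N)
    (v : ℕ) (j : Fin n) :
    ∑ i, ((Function.update c i₀ v i : ℕ) : ℤ) * a i j
      = (∑ i, (c i : ℤ) * a i j) + ((v : ℤ) - (c i₀ : ℤ)) * a i₀ j := by
  have hf : (fun i => ((Function.update c i₀ v i : ℕ) : ℤ) * a i j)
      = Function.update (fun i => (c i : ℤ) * a i j) i₀ ((v : ℤ) * a i₀ j) := by
    funext i
    by_cases h : i = i₀
    · subst h; simp
    · simp [Function.update, h]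
  rw [hf, Finset.sum_update_of_mem (Finset.mem_univ i₀)]
  rw [Finset.sum_eq_sum_sdiff_singleton_add (Finset.mem_univ i₀) (fun i => (c i : ℤ) * a i j)]
  ring

lemma sum_update_nat {N : ℕ} (c : Fin N → ℕ) (i₀ : Fin N) (v : ℕ) :
    ∑ i, Function.update c i₀ v i + c i₀ = (∑ i, c i) + v := by
  rw [Finset.sum_update_of_mem (Finset.mem_univ i₀)]
  rw [Finset.sum_eq_sum_sdiff_singleton_add (Finset.mem_univ i₀) c]
  ring

lemma reduction {n N : ℕ} (a : Fin N → Fin n → ℤ) {p : ℕ} (hp2 : 2 ≤ p)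
    {aexp q : ℕ} (hq : q = p ^ aexp)
    (M : Set (Fin n → ℤ))
    (hM : ∀ c : Fin N → ℕ, (fun j => ∑ i, (c i : ℤ) * a i j) ∈ M →
      ∀ i₀ : Fin N, q ≤ c i₀ →
        (fun j => (∑ i, (c i : ℤ) * a i j) - ((q : ℤ) - 1) * a i₀ j) ∈ M)
    (UM : Set (Fin N → ℕ))
    (hUM : UM = {v | (∀ i, v i ≤ q - 1) ∧ (fun j => ∑ i, (v i : ℤ) * a i j) ∈ M})
    (hUMne : UM.Nonempty)
    (wp : (Fin N → ℕ) → ℕ)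
    (hwp : ∀ v, wp v = ∑ i, ∑ k ∈ Finset.range aexp, (v i / p ^ k) % p) :
    ∀ c : Fin N → ℕ, (fun j => ∑ i, (c i : ℤ) * a i j) ∈ M →
      ∃ u ∈ UM, wp u ≤ ∑ i, sd p (c i) := by
  by_cases hq2 : q < 2
  · -- degenerate case q = 1, aexp = 0
    have hq1 : q = 1 := by
      have : 1 ≤ q := by rw [hq]; exact Nat.one_le_pow _ _ (by omega)
      omega
    have haexp : aexp = 0 := by
      by_contra h
      have : p ≤ p ^ aexp := Nat.le_self_pow h p
      omega
    intro c _
    obtain ⟨u, hu⟩ := hUMne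
    exact ⟨u, hu, by simp [hwp, haexp]⟩
  push_neg at hq2
  have key : ∀ s, ∀ c : Fin N → ℕ, ∑ i, c i = s →
      (fun j => ∑ i, (c i : ℤ) * a i j) ∈ M →
      ∃ u ∈ UM, wp u ≤ ∑ i, sd p (red q (c i)) := by
    intro s
    induction s using Nat.strong_induction_on with
    | _ s ih =>
      intro c hcs hcM
      by_cases hall : ∀ i, c i < q
      · refine ⟨c, ?_, ?_⟩
        · rw [hUM]
          exact ⟨fun i => by have := hall i; omega, hcM⟩
        · rw [hwp]
          apply le_of_eq
          refine Finset.sum_congr rfl fun i _ => ?_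
          rw [red_eq_of_lt (hall i)]
          exact (sd_eq_S hp2 (show c i < p ^ aexp by rw [← hq]; exact hall i)).symm
      · push_neg at hall
        obtain ⟨i₀, hi₀⟩ := hall
        set c' := Function.update c i₀ (c i₀ - (q - 1)) with hc'
        have hsum : ∑ i, c' i + c i₀ = (∑ i, c i) + (c i₀ - (q - 1)) :=
          sum_update_nat c i₀ (c i₀ - (q - 1))
        have hle : c i₀ ≤ s := hcs ▸ Finset.single_le_sum (fun i _ => Nat.zero_le _) (Finset.mem_univ i₀)
        have hs' : ∑ i, c' i = s - (q - 1) := by omega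
        have hcM' : (fun j => ∑ i, (c' i : ℤ) * a i j) ∈ M := by
          have h1 := hM c hcM i₀ hi₀
          have h2 : (fun j => ∑ i, (c' i : ℤ) * a i j)
              = (fun j => (∑ i, (c i : ℤ) * a i j) - ((q : ℤ) - 1) * a i₀ j) := by
            funext j
            rw [hc', sum_update_int]
            have hcast : ((c i₀ - (q - 1) : ℕ) : ℤ) = (c i₀ : ℤ) - ((q : ℤ) - 1) := by
              push_cast [Nat.cast_sub (show q - 1 ≤ c i₀ by omega)]
              omega
            rw [hcast]
            ring
          rw [h2]
          exact h1
        obtain ⟨u, huUM, hule⟩ := ih (s - (q - 1)) (by omega) c' hs' hcM'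
        refine ⟨u, huUM, hule.trans (le_of_eq ?_)⟩
        refine Finset.sum_congr rfl fun i _ => ?_
        by_cases h : i = i₀
        · subst h
          rw [hc', Function.update_self]
          rw [red_step hq2 hi₀]
        · rw [hc', Function.update_of_ne h]
  intro c hcM
  obtain ⟨u, huUM, hule⟩ := key (∑ i, c i) c rfl hcM
  exact ⟨u, huUM, hule.trans (Finset.sum_le_sum fun i _ =>
    sd_red_le hp2 hq hq2 (c i))⟩

lemma sum_if_zero {m k : ℕ} (hk : k < m) (f : ℕ → ℕ) :
    (∑ k' ∈ Finset.range m, if k' = k then 0 else f k') + f k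
      = ∑ k' ∈ Finset.range m, f k' := by
  have h1 : ∀ k' ∈ Finset.range m,
      f k' = (if k' = k then 0 else f k') + (if k' = k then f k' else 0) := by
    intro k' _
    by_cases h : k' = k <;> simp [h]
  rw [Finset.sum_congr rfl h1, Finset.sum_add_distrib]
  congr 1
  rw [Finset.sum_ite_eq' (Finset.range m) k f, if_pos (Finset.mem_range.mpr hk)]

lemma digits_fin {p aexp : ℕ} (hp2 : 2 ≤ p) (x : ℕ) (d : Fin aexp → ℕ)
    (hdlt : ∀ k, d k < p) (hx : x = ∑ k : Fin aexp, d k * p ^ (k : ℕ)) :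
    x < p ^ aexp ∧ (∀ k : Fin aexp, x / p ^ (k : ℕ) % p = d k)
      ∧ S p aexp x = ∑ k : Fin aexp, d k := by
  classical
  obtain ⟨E, hE⟩ : ∃ E : ℕ → ℕ, ∀ k', E k' = if h : k' < aexp then d ⟨k', h⟩ else 0 :=
    ⟨_, fun k' => rfl⟩
  have hEd : ∀ k : Fin aexp, E (k : ℕ) = d k := fun k => by
    rw [hE, dif_pos k.isLt]
  have hElt : ∀ k', k' < aexp → E k' < p := fun k' h => by
    rw [hE, dif_pos h]; exact hdlt _
  have hxE : x = ∑ k' ∈ Finset.range aexp, E k' * p ^ k' := by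
    rw [hx, ← Fin.sum_univ_eq_sum_range (fun k' => E k' * p ^ k') aexp]
    exact Finset.sum_congr rfl fun k _ => by rw [hEd k]
  obtain ⟨hlt, hdig⟩ := digits_of_expansion hp2 aexp E hElt
  refine ⟨hxE ▸ hlt, fun k => ?_, ?_⟩
  · rw [hxE]
    rw [hdig (k : ℕ) k.isLt, hEd k]
  · unfold S
    rw [show ∑ k' ∈ Finset.range aexp, x / p ^ k' % p = ∑ k' ∈ Finset.range aexp, E k' from
      Finset.sum_congr rfl fun k' hk' => by
        rw [hxE, hdig k' (Finset.mem_range.mp hk')]]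
    rw [← Fin.sum_univ_eq_sum_range E aexp]
    exact Finset.sum_congr rfl fun k _ => hEd k

lemma swap_sum {n N aexp : ℕ} (a : Fin N → Fin n → ℤ) (p : ℕ)
    (d : Fin aexp → Fin N → ℕ) (u : Fin N → ℕ)
    (hu : ∀ i, u i = ∑ k : Fin aexp, d k i * p ^ (k : ℕ)) (j : Fin n) :
    ∑ i, (u i : ℤ) * a i j
      = ∑ k : Fin aexp, (p : ℤ) ^ (k : ℕ) * ∑ i, (d k i : ℤ) * a i j := by
  calc ∑ i, (u i : ℤ) * a i j
      = ∑ i, ∑ k : Fin aexp, (p : ℤ) ^ (k : ℕ) * ((d k i : ℤ) * a i j) := by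
        refine Finset.sum_congr rfl fun i _ => ?_
        rw [hu i]
        push_cast
        rw [Finset.sum_mul]
        exact Finset.sum_congr rfl fun k _ => by ring
    _ = ∑ k : Fin aexp, ∑ i, (p : ℤ) ^ (k : ℕ) * ((d k i : ℤ) * a i j) := Finset.sum_comm
    _ = ∑ k : Fin aexp, (p : ℤ) ^ (k : ℕ) * ∑ i, (d k i : ℤ) * a i j := by
        exact Finset.sum_congr rfl fun k _ => (Finset.mul_sum _ _ _).symm

end Stmt11Aux


/-- Proposition 5.14: the set `U_{M,min}` of minimizers of the `p`-weight on
`U_M` decomposes as a disjoint union, over sequences `(γ_0,…,γ_{a-1}) ∈ Γ_M` of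
good elements with `Σ_k p^k γ_k ∈ M` and `Σ_k w(γ_k) = w_p(M)`, of the sets
`U(γ_0,…,γ_{a-1})` of vectors assembled from digit choices in `U⁺_min(γ_k)`. -/
theorem stmt11 {n N : ℕ} (a : Fin N → Fin n → ℤ) (p : ℕ) (hp : p.Prime)
    (aexp : ℕ) (q : ℕ) (hq : q = p ^ aexp)
    (M : Set (Fin n → ℤ))
    (hM : ∀ c : Fin N → ℕ, (fun j => ∑ i, (c i : ℤ) * a i j) ∈ M →
      ∀ i₀ : Fin N, q ≤ c i₀ →
        (fun j => (∑ i, (c i : ℤ) * a i j) - ((q : ℤ) - 1) * a i₀ j) ∈ M)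
    (UM : Set (Fin N → ℕ))
    (hUM : UM = {v | (∀ i, v i ≤ q - 1) ∧
      (fun j => ∑ i, (v i : ℤ) * a i j) ∈ M})
    (hUMne : UM.Nonempty)
    (wp : (Fin N → ℕ) → ℕ)
    (hwp : ∀ v, wp v = ∑ i, ∑ k ∈ Finset.range aexp, (v i / p ^ k) % p)
    (wpM : ℕ) (hwpM : IsLeast {s | ∃ v ∈ UM, wp v = s} wpM)
    (UMmin : Set (Fin N → ℕ)) (hUMmin : UMmin = {v ∈ UM | wp v = wpM})
    (w : (Fin n → ℤ) → ℕ)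
    (hw : ∀ β, w β = sInf {s | ∃ v : Fin N → ℕ,
      (∀ j, ∑ i, (v i : ℤ) * a i j = β j) ∧ ∑ i, v i = s})
    (UminP : (Fin n → ℤ) → (Fin N → ℕ) → Prop)
    (hUminP : ∀ β v, UminP β v ↔
      ((∀ j, ∑ i, (v i : ℤ) * a i j = β j) ∧ ∑ i, v i = w β))
    (good : (Fin n → ℤ) → Prop)
    (hgood : ∀ β, good β ↔ ∀ v, UminP β v → ∀ i, v i ≤ p - 1)
    (ΓM : Set (Fin aexp → Fin n → ℤ))
    (hΓM : ∀ γseq, γseq ∈ ΓM ↔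
      ((∀ k, good (γseq k)) ∧
        (fun j => ∑ k : Fin aexp, (p : ℤ) ^ (k : ℕ) * γseq k j) ∈ M ∧
        ∑ k : Fin aexp, w (γseq k) = wpM))
    (Uγ : (Fin aexp → Fin n → ℤ) → Set (Fin N → ℕ))
    (hUγ : ∀ γseq u, u ∈ Uγ γseq ↔
      ∃ d : Fin aexp → Fin N → ℕ, (∀ k, UminP (γseq k) (d k)) ∧
        ∀ i, u i = ∑ k : Fin aexp, d k i * p ^ (k : ℕ)) :
    (UMmin = ⋃ γseq ∈ ΓM, Uγ γseq) ∧
      ∀ γseq ∈ ΓM, ∀ γseq' ∈ ΓM, γseq ≠ γseq' →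
        Disjoint (Uγ γseq) (Uγ γseq') := by
  have hp2 : 2 ≤ p := hp.two_le
  have hq1 : 1 ≤ q := by rw [hq]; exact Nat.one_le_pow _ _ (by omega)
  have hwpS : ∀ v, wp v = ∑ i, Stmt11Aux.S p aexp (v i) := hwp
  -- Direction `⊆`
  have main1 : ∀ u ∈ UMmin, ∃ γseq ∈ ΓM, u ∈ Uγ γseq := by
    intro u hu
    rw [hUMmin] at hu
    obtain ⟨huUM, huwp⟩ := hu
    have huUM' := huUM
    rw [hUM] at huUM'
    obtain ⟨hub, huM⟩ := huUM'
    have hult : ∀ i, u i < p ^ aexp := fun i => by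
      have h1 := hub i
      have h2 : q = p ^ aexp := hq
      omega
    obtain ⟨d, hd⟩ : ∃ d : Fin aexp → Fin N → ℕ,
        ∀ k i, d k i = u i / p ^ (k : ℕ) % p := ⟨_, fun k i => rfl⟩
    have hdlt : ∀ (k : Fin aexp) i, d k i < p := fun k i => by
      rw [hd]; exact Nat.mod_lt _ (by omega)
    have hexpand : ∀ i, u i = ∑ k : Fin aexp, d k i * p ^ (k : ℕ) := by
      intro i
      rw [show (∑ k : Fin aexp, d k i * p ^ (k : ℕ))
          = ∑ k : Fin aexp, (u i / p ^ (k : ℕ) % p) * p ^ (k : ℕ) from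
        Finset.sum_congr rfl fun k _ => by rw [hd]]
      rw [Fin.sum_univ_eq_sum_range (fun k => u i / p ^ k % p * p ^ k) aexp]
      exact (Stmt11Aux.expansion hp2 aexp (u i) (hult i)).symm
    obtain ⟨γ, hγ⟩ : ∃ γ : Fin aexp → Fin n → ℤ,
        ∀ k j, γ k j = ∑ i, (d k i : ℤ) * a i j := ⟨_, fun k j => rfl⟩
    -- the key inequality
    have star : ∀ (k : Fin aexp) (v : Fin N → ℕ),
        (∀ j, ∑ i, (v i : ℤ) * a i j = γ k j) →
        ∑ i, d k i ≤ ∑ i, Stmt11Aux.sd p (v i) := by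
      intro k v hv
      obtain ⟨A, hA⟩ : ∃ A : Fin N → ℕ, ∀ i, A i = ∑ k' ∈ Finset.range aexp,
          (if k' = (k : ℕ) then 0 else u i / p ^ k' % p) * p ^ k' := ⟨_, fun i => rfl⟩
      have hAsd : ∀ i, Stmt11Aux.sd p (A i) + d k i = Stmt11Aux.S p aexp (u i) := by
        intro i
        rw [hA, Stmt11Aux.sd_of_expansion hp2 aexp _ (fun k' _ => by
          split
          · omega
          · exact Nat.mod_lt _ (by omega)), hd]
        exact Stmt11Aux.sum_if_zero k.isLt (fun k' => u i / p ^ k' % p)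
      have hAu : ∀ i, A i + d k i * p ^ (k : ℕ) = u i := by
        intro i
        have h2 : (∑ k' ∈ Finset.range aexp,
              (if k' = (k : ℕ) then 0 else u i / p ^ k' % p) * p ^ k')
            + (u i / p ^ (k : ℕ) % p) * p ^ (k : ℕ)
            = ∑ k' ∈ Finset.range aexp, (u i / p ^ k' % p) * p ^ k' := by
          rw [← Stmt11Aux.sum_if_zero k.isLt (fun k' => u i / p ^ k' % p * p ^ k')]
          congr 1
          refine Finset.sum_congr rfl fun k' _ => ?_
          by_cases h : k' = (k : ℕ) <;> simp [h]
        rw [hA, hd, h2]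
        exact Stmt11Aux.expansion hp2 aexp (u i) (hult i)
      obtain ⟨c, hc⟩ : ∃ c : Fin N → ℕ, ∀ i, c i = A i + v i * p ^ (k : ℕ) :=
        ⟨_, fun i => rfl⟩
      have hcM : (fun j => ∑ i, (c i : ℤ) * a i j) ∈ M := by
        have heq : (fun j => ∑ i, (c i : ℤ) * a i j)
            = (fun j => ∑ i, (u i : ℤ) * a i j) := by
          funext j
          calc ∑ i, (c i : ℤ) * a i j
              = ∑ i, ((A i : ℤ) * a i j + (p : ℤ) ^ (k : ℕ) * ((v i : ℤ) * a i j)) := by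
                refine Finset.sum_congr rfl fun i _ => ?_
                rw [hc]
                push_cast
                ring
            _ = (∑ i, (A i : ℤ) * a i j)
                + (p : ℤ) ^ (k : ℕ) * ∑ i, (v i : ℤ) * a i j := by
                rw [Finset.sum_add_distrib, Finset.mul_sum]
            _ = (∑ i, (A i : ℤ) * a i j)
                + (p : ℤ) ^ (k : ℕ) * ∑ i, (d k i : ℤ) * a i j := by
                rw [hv j, hγ]
            _ = ∑ i, ((A i : ℤ) * a i j + (p : ℤ) ^ (k : ℕ) * ((d k i : ℤ) * a i j)) := by
                rw [Finset.sum_add_distrib, Finset.mul_sum]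
            _ = ∑ i, (u i : ℤ) * a i j := by
                refine Finset.sum_congr rfl fun i _ => ?_
                rw [← hAu i]
                push_cast
                ring
        rw [heq]
        exact huM
      obtain ⟨ut, hutUM, hutle⟩ :=
        Stmt11Aux.reduction a hp2 hq M hM UM hUM hUMne wp hwp c hcM
      have f4 : wp ut ≤ ∑ i, (Stmt11Aux.sd p (A i) + Stmt11Aux.sd p (v i)) := by
        refine hutle.trans (Finset.sum_le_sum fun i _ => ?_)
        calc Stmt11Aux.sd p (c i)
            ≤ Stmt11Aux.sd p (A i) + Stmt11Aux.sd p (v i * p ^ (k : ℕ)) := by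
              rw [hc]
              exact Stmt11Aux.sd_subadd hp2
          _ = Stmt11Aux.sd p (A i) + Stmt11Aux.sd p (v i) := by
              rw [Stmt11Aux.sd_mul_pow hp2]
      have f3 : wpM ≤ wp ut := hwpM.2 ⟨ut, hutUM, rfl⟩
      have f1 : wp u = ∑ i, (Stmt11Aux.sd p (A i) + d k i) := by
        rw [hwpS u]
        exact Finset.sum_congr rfl fun i _ => (hAsd i).symm
      rw [Finset.sum_add_distrib] at f4 f1
      omega
    have hwγ : ∀ k, w (γ k) = ∑ i, d k i := by
      intro k
      rw [hw]
      apply le_antisymm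
      · exact Nat.sInf_le ⟨d k, fun j => (hγ k j).symm, rfl⟩
      · refine le_csInf ⟨∑ i, d k i, d k, fun j => (hγ k j).symm, rfl⟩ ?_
        rintro s ⟨v, hv1, rfl⟩
        calc ∑ i, d k i ≤ ∑ i, Stmt11Aux.sd p (v i) := star k v hv1
          _ ≤ ∑ i, v i := Finset.sum_le_sum fun i _ => Stmt11Aux.sd_le hp2
    have hUminPd : ∀ k, UminP (γ k) (d k) :=
      fun k => (hUminP _ _).mpr ⟨fun j => (hγ k j).symm, (hwγ k).symm⟩
    have hgoodγ : ∀ k, good (γ k) := by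
      intro k
      rw [hgood]
      intro v hvP i0
      by_contra hcon
      have hvp : p ≤ v i0 := by omega
      obtain ⟨hv1, hv2⟩ := (hUminP _ _).mp hvP
      have hlt : ∑ i, Stmt11Aux.sd p (v i) < ∑ i, v i :=
        Finset.sum_lt_sum (fun i _ => Stmt11Aux.sd_le hp2)
          ⟨i0, Finset.mem_univ _, Stmt11Aux.sd_lt hp2 hvp⟩
      have hstar := star k v hv1
      rw [hv2, hwγ k] at hlt
      omega
    have hwpu : wpM = ∑ k : Fin aexp, ∑ i, d k i := by
      rw [← huwp, hwpS u, Finset.sum_comm]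
      refine Finset.sum_congr rfl fun i _ => ?_
      obtain ⟨_, _, hS⟩ := Stmt11Aux.digits_fin hp2 (u i) (fun k => d k i)
        (fun k => hdlt k i) (hexpand i)
      exact hS
    have hγM : γ ∈ ΓM := by
      rw [hΓM]
      refine ⟨hgoodγ, ?_, ?_⟩
      · have heq : (fun j => ∑ k : Fin aexp, (p : ℤ) ^ (k : ℕ) * γ k j)
            = (fun j => ∑ i, (u i : ℤ) * a i j) := by
          funext j
          rw [Stmt11Aux.swap_sum a p d u hexpand j]
          exact Finset.sum_congr rfl fun k _ => by rw [hγ]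
        rw [heq]
        exact huM
      · rw [hwpu]
        exact Finset.sum_congr rfl fun k _ => hwγ k
    exact ⟨γ, hγM, (hUγ γ u).mpr ⟨d, hUminPd, hexpand⟩⟩
  -- Direction `⊇`
  have main2 : ∀ γseq ∈ ΓM, ∀ u ∈ Uγ γseq, u ∈ UMmin := by
    intro γseq hγseq u hu
    obtain ⟨d, hdP, hdu⟩ := (hUγ _ _).mp hu
    rw [hΓM] at hγseq
    obtain ⟨hgoods, hMmem, hsumw⟩ := hγseq
    have hdlt : ∀ (k : Fin aexp) i, d k i < p := by
      intro k i
      have := (hgood _).mp (hgoods k) (d k) (hdP k) i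
      omega
    have hdig : ∀ i, u i < p ^ aexp ∧ (∀ k : Fin aexp, u i / p ^ (k : ℕ) % p = d k i)
        ∧ Stmt11Aux.S p aexp (u i) = ∑ k : Fin aexp, d k i := fun i =>
      Stmt11Aux.digits_fin hp2 (u i) (fun k => d k i) (fun k => hdlt k i) (hdu i)
    have huM' : (fun j => ∑ i, (u i : ℤ) * a i j) ∈ M := by
      have heq : (fun j => ∑ i, (u i : ℤ) * a i j)
          = (fun j => ∑ k : Fin aexp, (p : ℤ) ^ (k : ℕ) * γseq k j) := by
        funext j
        rw [Stmt11Aux.swap_sum a p d u hdu j]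
        exact Finset.sum_congr rfl fun k _ => by
          rw [((hUminP _ _).mp (hdP k)).1 j]
      rw [heq]
      exact hMmem
    have huUM : u ∈ UM := by
      rw [hUM]
      exact ⟨fun i => by have h1 := (hdig i).1; have h2 : q = p ^ aexp := hq; omega, huM'⟩
    have hwpu : wp u = wpM := by
      rw [hwpS u, ← hsumw,
        Finset.sum_congr rfl (fun i _ => (hdig i).2.2), Finset.sum_comm]
      exact Finset.sum_congr rfl fun k _ => ((hUminP _ _).mp (hdP k)).2
    rw [hUMmin]
    exact ⟨huUM, hwpu⟩
  constructor
  · ext u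
    simp only [Set.mem_iUnion, exists_prop]
    constructor
    · exact fun hu => main1 u hu
    · rintro ⟨γseq, hγseq, hu⟩
      exact main2 γseq hγseq u hu
  · intro γ1 h1 γ2 h2 hne
    rw [Set.disjoint_left]
    intro u hu1 hu2
    apply hne
    obtain ⟨d1, hd1P, hd1u⟩ := (hUγ _ _).mp hu1
    obtain ⟨d2, hd2P, hd2u⟩ := (hUγ _ _).mp hu2
    have key : ∀ (γ : Fin aexp → Fin n → ℤ), γ ∈ ΓM →
        ∀ d : Fin aexp → Fin N → ℕ, (∀ k, UminP (γ k) (d k)) →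
        (∀ i, u i = ∑ k : Fin aexp, d k i * p ^ (k : ℕ)) →
        ∀ (k : Fin aexp) (i : Fin N), d k i = u i / p ^ (k : ℕ) % p := by
      intro γ hγ d hdP hdu k i
      rw [hΓM] at hγ
      have hdlt : ∀ (k : Fin aexp) i, d k i < p := by
        intro k i
        have := (hgood _).mp (hγ.1 k) (d k) (hdP k) i
        omega
      exact ((Stmt11Aux.digits_fin hp2 (u i) (fun k => d k i)
        (fun k => hdlt k i) (hdu i)).2.1 k).symm
    have e1 := key γ1 h1 d1 hd1P hd1u
    have e2 := key γ2 h2 d2 hd2P hd2u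
    funext k j
    rw [← ((hUminP _ _).mp (hd1P k)).1 j, ← ((hUminP _ _).mp (hd2P k)).1 j]
    exact Finset.sum_congr rfl fun i _ => by rw [e1 k i, e2 k i]
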